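/- Let p be a prime with p ≡ 3 (mod 4) and set m = (p − 1)/2. Then Σ_{j=0}^{m} binom(m, j) · ∏_{i=1}^{m} (j + i) ≡ 0 (mod p). -/

import Mathlib

open Finset

lemma fact_prod (j m : ℕ) :
    j.factorial * ∏ i ∈ Icc 1 m, (j + i) = (j + m).factorial := by
  induction m with
  | zero => simp
  | succ m ih =>
      rw [Finset.prod_Icc_succ_top (by omega : 1 ≤ m + 1), ← mul_assoc, ih]
      rw [show j + (m + 1) = (j + m) + 1 from by omega, Nat.factorial_succ]
      ring

lemma wilson_pair (p : ℕ) [hp : Fact p.Prime] (b : ℕ) (hb : b ≤ p - 1) :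
    (((p - 1 - b).factorial : ZMod p)) * (b.factorial : ZMod p) = (-1) ^ (b + 1) := by
  induction b with
  | zero => simpa using ZMod.wilsons_lemma p
  | succ b ih =>
      have hp2 : 2 ≤ p := hp.out.two_le
      have h1 : p - 1 - b = (p - 1 - (b + 1)) + 1 := by omega
      have ih' := ih (by omega)
      rw [h1, Nat.factorial_succ] at ih'
      push_cast at ih'
      have hc : ((p - 1 - (b + 1) : ℕ) : ZMod p) + 1 = -((b : ZMod p) + 1) := by
        have h2 : (p - 1 - (b + 1) + 1) + (b + 1) = p := by omega
        have h3 := congrArg (Nat.cast : ℕ → ZMod p) h2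
        push_cast at h3
        rw [ZMod.natCast_self] at h3
        linear_combination h3
      rw [Nat.factorial_succ]
      push_cast
      linear_combination (-1 : ZMod p) * ih' +
        (((p - 1 - (b + 1)).factorial : ZMod p) * (b.factorial : ZMod p)) * hc

theorem stmt19 (p : ℕ) (hp : p.Prime) (hp4 : p % 4 = 3) :
    (∑ j ∈ range ((p - 1) / 2 + 1),
        ((p - 1) / 2).choose j * ∏ i ∈ Icc 1 ((p - 1) / 2), (j + i)) ≡ 0 [MOD p] := by
  haveI : Fact p.Prime := ⟨hp⟩
  set m := (p - 1) / 2 with hm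
  have hp2 : 2 ≤ p := hp.two_le
  have h2m : 2 * m = p - 1 := by omega
  have hmodd : m % 2 = 1 := by omega
  -- reduce to ZMod p
  rw [Nat.modEq_zero_iff_dvd, ← ZMod.natCast_eq_zero_iff]
  push_cast
  set F : ℕ → ZMod p := fun j => ∏ i ∈ Icc 1 m, ((j : ZMod p) + (i : ℕ)) with hF
  have hcast : ∀ j, (∏ i ∈ Icc 1 m, ((j + i : ℕ) : ZMod p)) = F j := by
    intro j
    apply Finset.prod_congr rfl
    intro i _
    push_cast
    ring
  -- key: for j ≤ m, F j = - F (m - j)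
  have hfactne : ∀ k, k ≤ 2 * m → ((k.factorial : ZMod p) ≠ 0) := by
    intro k hk h
    rw [ZMod.natCast_eq_zero_iff] at h
    have := (Nat.Prime.dvd_factorial hp).mp h
    omega
  have hkey : ∀ j, j ≤ m → F j = - F (m - j) := by
    intro j hj
    have e1 : (j.factorial : ZMod p) * F j = ((j + m).factorial : ZMod p) := by
      have := congrArg (Nat.cast : ℕ → ZMod p) (fact_prod j m)
      push_cast at this
      rw [hF]
      rw [← this]
    have e2 : ((m - j).factorial : ZMod p) * F (m - j) = (((m - j) + m).factorial : ZMod p) := by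
      have := congrArg (Nat.cast : ℕ → ZMod p) (fact_prod (m - j) m)
      push_cast at this
      rw [hF]
      rw [← this]
    have w1 : (((j + m).factorial : ZMod p)) * ((m - j).factorial : ZMod p)
        = (-1) ^ ((m - j) + 1) := by
      have h := wilson_pair p (m - j) (by omega)
      have : p - 1 - (m - j) = j + m := by omega
      rwa [this] at h
    have w2 : ((((m - j) + m).factorial : ZMod p)) * (j.factorial : ZMod p)
        = (-1) ^ (j + 1) := by
      have h := wilson_pair p j (by omega)
      have : p - 1 - j = (m - j) + m := by omega
      rwa [this] at h
    have u1 : (j.factorial : ZMod p) * ((m - j).factorial : ZMod p) * F j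
        = (-1) ^ ((m - j) + 1) := by
      calc (j.factorial : ZMod p) * ((m - j).factorial : ZMod p) * F j
          = ((j.factorial : ZMod p) * F j) * ((m - j).factorial : ZMod p) := by ring
        _ = (((j + m).factorial : ZMod p)) * ((m - j).factorial : ZMod p) := by rw [e1]
        _ = (-1) ^ ((m - j) + 1) := w1
    have u2 : (j.factorial : ZMod p) * ((m - j).factorial : ZMod p) * F (m - j)
        = (-1) ^ (j + 1) := by
      calc (j.factorial : ZMod p) * ((m - j).factorial : ZMod p) * F (m - j)
          = (((m - j).factorial : ZMod p) * F (m - j)) * (j.factorial : ZMod p) := by ring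
        _ = ((((m - j) + m).factorial : ZMod p)) * (j.factorial : ZMod p) := by rw [e2]
        _ = (-1) ^ (j + 1) := w2
    have hsign : ((-1 : ZMod p)) ^ ((m - j) + 1) = - ((-1) ^ (j + 1)) := by
      have : ((m - j) + 1) + (j + 1) = m + 2 := by omega
      have hpow : ((-1 : ZMod p)) ^ (((m - j) + 1) + (j + 1)) = (-1) ^ (m + 2) := by rw [this]
      rw [pow_add] at hpow
      have hm2 : ((-1 : ZMod p)) ^ (m + 2) = -1 := by
        rw [show m + 2 = 2 * (m / 2) + 1 + 2 from by omega]
        rw [pow_add, pow_add, pow_mul]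
        norm_num
      have hunit : ((-1 : ZMod p)) ^ (j + 1) * ((-1 : ZMod p)) ^ (j + 1) = 1 := by
        rw [← pow_add, show (j+1) + (j+1) = 2 * (j+1) from by ring, pow_mul]
        norm_num
      calc ((-1 : ZMod p)) ^ ((m - j) + 1)
          = ((-1 : ZMod p)) ^ ((m - j) + 1) * (((-1 : ZMod p)) ^ (j + 1) * ((-1 : ZMod p)) ^ (j + 1)) := by
            rw [hunit]; ring
        _ = (((-1 : ZMod p)) ^ ((m - j) + 1) * ((-1 : ZMod p)) ^ (j + 1)) * ((-1 : ZMod p)) ^ (j + 1) := by ring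
        _ = (-1) ^ (m + 2) * ((-1 : ZMod p)) ^ (j + 1) := by rw [hpow]
        _ = - ((-1) ^ (j + 1)) := by rw [hm2]; ring
    have hne : (j.factorial : ZMod p) * ((m - j).factorial : ZMod p) ≠ 0 :=
      mul_ne_zero (hfactne j (by omega)) (hfactne (m - j) (by omega))
    have : (j.factorial : ZMod p) * ((m - j).factorial : ZMod p) * (F j + F (m - j)) = 0 := by
      rw [mul_add, u1, u2, hsign]; ring
    have hsum0 : F j + F (m - j) = 0 := by
      rcases mul_eq_zero.mp this with h | h
      · exact absurd h hne
      · exact h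
    exact eq_neg_of_add_eq_zero_left hsum0
  -- now the sum
  have hgoal : ∑ j ∈ range (m + 1), ((m.choose j : ZMod p)) * F j = 0 := by
    set S := ∑ j ∈ range (m + 1), ((m.choose j : ZMod p)) * F j with hS
    have hrefl := Finset.sum_range_reflect (fun j => ((m.choose j : ZMod p)) * F j) (m + 1)
    simp only [Nat.add_sub_cancel] at hrefl
    have hSneg : S = -S := by
      rw [hS]
      conv_lhs => rw [← hrefl]
      rw [← Finset.sum_neg_distrib]
      refine Finset.sum_congr rfl ?_
      intro j hj
      have hj' : j ≤ m := by have := Finset.mem_range.mp hj; omega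
      rw [Nat.choose_symm hj', hkey j hj']
      ring
    have h2 : (2 : ZMod p) * S = 0 := by linear_combination hSneg
    have h2ne : (2 : ZMod p) ≠ 0 := by
      have : ((2 : ℕ) : ZMod p) ≠ 0 := by
        rw [Ne, ZMod.natCast_eq_zero_iff]
        intro h
        have := Nat.le_of_dvd (by norm_num) h
        omega
      simpa using this
    rcases mul_eq_zero.mp h2 with h | h
    · exact absurd h h2ne
    · exact h
  calc ∑ j ∈ range (m + 1), ((m.choose j : ZMod p)) *
        ∏ i ∈ Icc 1 m, ((j : ZMod p) + (i : ℕ))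
      = ∑ j ∈ range (m + 1), ((m.choose j : ZMod p)) * F j := rfl
    _ = 0 := hgoal
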